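/- arXiv:2512.12460 — 3 statements merged into one kernel-verified Lean document; each statement's English description precedes it below -/
import Mathlib

section
/- Let A be a differential graded algebra, M a left DG A-module, and N ⊆ M a graded A-submodule. Define N₊ = N + d(N) and N₋ = {m ∈ N : d(m) ∈ N}. Then N₋ and N₊ are DG submodules of M, and the inclusion N₋ ↪ N₊ is a quasi-isomorphism (i.e., induces an isomorphism on all cohomology groups). -/
/-- For a DG algebra `A` (graded by `𝒜` with differential `dA`) and a left DG
`A`-module `M` (graded by `ℳ` with differential `dM` satisfying the graded Leibniz rule),
and a graded `A`-submodule `N ⊆ M`, the external submodule `N₊ = N + dM(N)` and the internal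
submodule `N₋ = {m ∈ N : dM m ∈ N}` are DG submodules of `M` (stable under the `A`-action and
under `dM`), and the inclusion `N₋ ↪ N₊` is a quasi-isomorphism (it is surjective and injective
on cohomology). -/
theorem stmt0 (k : Type*) [Field k] (A : Type*) [Ring A] [Algebra k A]
    (M : Type*) [AddCommGroup M] [Module k M] [Module A M] [IsScalarTower k A M]
    -- grading of the DG algebra `A`
    (𝒜 : ℤ → Submodule k A) (hA : (⨆ i, 𝒜 i) = ⊤)
    (hAmul : ∀ (i j : ℤ), ∀ a ∈ 𝒜 i, ∀ b ∈ 𝒜 j, a * b ∈ 𝒜 (i + j))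
    -- grading of the DG module `M`
    (ℳ : ℤ → Submodule k M) (hM : (⨆ i, ℳ i) = ⊤)
    (hMsmul : ∀ (i j : ℤ), ∀ a ∈ 𝒜 i, ∀ m ∈ ℳ j, a • m ∈ ℳ (i + j))
    -- the differentials, of degree `+1`, squaring to zero
    (dA : A →ₗ[k] A) (dM : M →ₗ[k] M)
    (hdA1 : ∀ i, (𝒜 i).map dA ≤ 𝒜 (i + 1))
    (hdM1 : ∀ i, (ℳ i).map dM ≤ ℳ (i + 1))
    (hdA2 : ∀ a, dA (dA a) = 0) (hdM2 : ∀ m, dM (dM m) = 0)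
    -- graded Leibniz rule for the module differential
    (hLeib : ∀ (i : ℤ), ∀ a ∈ 𝒜 i, ∀ m : M,
      dM (a • m) = dA a • m + ((Int.negOnePow i : ℤˣ) : ℤ) • (a • dM m))
    -- a graded `A`-submodule `N` of `M`
    (N : Submodule A M)
    (hNgr : N.restrictScalars k = ⨆ i, N.restrictScalars k ⊓ ℳ i) :
    -- `N₊ := N + dM(N)` and `N₋ := {m ∈ N : dM m ∈ N}`
    ∀ NP NM : Submodule k M,
      NP = N.restrictScalars k ⊔ (N.restrictScalars k).map dM →
      NM = N.restrictScalars k ⊓ (N.restrictScalars k).comap dM →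
      -- `N₊` and `N₋` are `A`-submodules of `M` ...
      (∀ a : A, ∀ m ∈ NP, a • m ∈ NP) ∧
      (∀ a : A, ∀ m ∈ NM, a • m ∈ NM) ∧
      -- ... closed under the differential, i.e. DG submodules ...
      (∀ m ∈ NP, dM m ∈ NP) ∧
      (∀ m ∈ NM, dM m ∈ NM) ∧
      -- ... and the inclusion `N₋ ↪ N₊` is surjective on cohomology ...
      (∀ m ∈ NP, dM m = 0 → ∃ x ∈ NM, ∃ y ∈ NP, m = x + dM y) ∧
      -- ... and injective on cohomology.
      (∀ x ∈ NM, dM x = 0 → (∃ y ∈ NP, x = dM y) → ∃ z ∈ NM, x = dM z) := by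
  intro NP NM hP hQ
  subst hP; subst hQ
  set Nk := N.restrictScalars k with hNk
  have hNmem : ∀ m, m ∈ Nk ↔ m ∈ N := fun m => Iff.rfl
  have hAsmulN : ∀ (a : A), ∀ m ∈ Nk, a • m ∈ Nk := fun a m hm => N.smul_mem a hm
  have hNle : ∀ m ∈ Nk, m ∈ Nk ⊔ Nk.map dM := fun m hm => Submodule.mem_sup_left hm
  have hdNle : ∀ m ∈ Nk, dM m ∈ Nk ⊔ Nk.map dM := fun m hm =>
    Submodule.mem_sup_right (Submodule.mem_map_of_mem hm)
  -- key lemma, by homogeneous decomposition of `a`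
  have key : ∀ a : A, ∀ m ∈ Nk,
      a • dM m ∈ Nk ⊔ Nk.map dM ∧ (dM m ∈ Nk → dM (a • m) ∈ Nk) := by
    intro a
    have ha : a ∈ ⨆ i, 𝒜 i := by rw [hA]; trivial
    refine Submodule.iSup_induction (x := a) 𝒜 (motive := fun a => ∀ m ∈ Nk,
        a • dM m ∈ Nk ⊔ Nk.map dM ∧ (dM m ∈ Nk → dM (a • m) ∈ Nk)) ha ?_ ?_ ?_
    ·   intro i a hai
        intro m hm
        have hL := hLeib i a hai m
        have h1 : dM (a • m) ∈ Nk ⊔ Nk.map dM := hdNle _ (hAsmulN a m hm)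
        have h2 : dA a • m ∈ Nk := hAsmulN _ m hm
        rcases Int.units_eq_one_or (Int.negOnePow i) with h | h <;> rw [h] at hL
        · constructor
          · have : a • dM m = dM (a • m) - dA a • m := by
              rw [hL]; push_cast; rw [one_smul]; abel
            rw [this]
            exact sub_mem h1 (hNle _ h2)
          · intro hdm
            rw [hL]; push_cast; rw [one_smul]
            exact add_mem h2 (hAsmulN a _ hdm)
        · constructor
          · have : a • dM m = dA a • m - dM (a • m) := by
              have : ((((-1 : ℤˣ) : ℤ)) • (a • dM m)) = -(a • dM m) := by
                push_cast; rw [neg_one_smul]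
              rw [hL, this]; abel
            rw [this]
            exact sub_mem (hNle _ h2) h1
          · intro hdm
            rw [hL]
            refine add_mem h2 ?_
            have : ((((-1 : ℤˣ) : ℤ)) • (a • dM m)) = -(a • dM m) := by
              push_cast; rw [neg_one_smul]
            rw [this]
            exact neg_mem (hAsmulN a _ hdm)
    ·   intro m hm
        refine ⟨by rw [zero_smul]; exact zero_mem _, fun _ => by
          rw [zero_smul, map_zero]; exact zero_mem _⟩
    ·   intro x y hx hy m hm
        obtain ⟨hx1, hx2⟩ := hx m hm
        obtain ⟨hy1, hy2⟩ := hy m hm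
        refine ⟨by rw [add_smul]; exact add_mem hx1 hy1, fun hdm => by
          rw [add_smul, map_add]; exact add_mem (hx2 hdm) (hy2 hdm)⟩
  refine ⟨?_, ?_, ?_, ?_, ?_, ?_⟩
  · -- NP is an A-submodule
    intro a m hm
    rcases Submodule.mem_sup.mp hm with ⟨n, hn, n', hn', rfl⟩
    rcases hn' with ⟨p, hp, rfl⟩
    rw [smul_add]
    exact add_mem (hNle _ (hAsmulN a n hn)) (key a p hp).1
  · -- NM is an A-submodule
    intro a m hm
    obtain ⟨hm1, hm2⟩ := hm
    exact ⟨hAsmulN a m hm1, (key a m hm1).2 hm2⟩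
  · -- NP closed under dM
    intro m hm
    rcases Submodule.mem_sup.mp hm with ⟨n, hn, n', hn', rfl⟩
    rcases hn' with ⟨p, hp, rfl⟩
    rw [map_add, hdM2, add_zero]
    exact hdNle n hn
  · -- NM closed under dM
    intro m hm
    obtain ⟨hm1, hm2⟩ := hm
    refine ⟨hm2, ?_⟩
    show dM (dM m) ∈ Nk
    rw [hdM2]; exact zero_mem _
  · -- surjective on cohomology
    intro m hm hdm
    rcases Submodule.mem_sup.mp hm with ⟨n, hn, n', hn', rfl⟩
    rcases hn' with ⟨p, hp, rfl⟩
    have hdn : dM n = 0 := by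
      have := hdm
      rwa [map_add, hdM2, add_zero] at this
    refine ⟨n, ⟨hn, ?_⟩, p, hNle _ hp, rfl⟩
    show dM n ∈ Nk
    rw [hdn]; exact zero_mem _
  · -- injective on cohomology
    intro x hx _ ⟨y, hy, hxy⟩
    rcases Submodule.mem_sup.mp hy with ⟨n, hn, n', hn', rfl⟩
    rcases hn' with ⟨p, hp, rfl⟩
    have : x = dM n := by rw [hxy, map_add, hdM2, add_zero]
    refine ⟨n, ⟨hn, ?_⟩, this⟩
    show dM n ∈ Nk
    rw [← this]; exact hx.1
end

section
/- Let A = k⟨x₁,…,xₙ⟩ be a finite-cell DG algebra, i.e., the underlying graded algebra is free on x₁,…,xₙ and dxᵢ ∈ k⟨x₁,…,x_{i-1}⟩ for each i. Then for every nonzero polynomial f ∈ A with df ≠ 0, TIP(df) < TIP(f) with respect to the degree order, where TIP denotes the leading monomial. -/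
noncomputable section

/-- The free algebra `k⟨x₁,…,xₙ⟩` as the monoid algebra of the free monoid on `n` letters. -/
abbrev FA (k : Type) [Field k] (n : ℕ) := MonoidAlgebra k (FreeMonoid (Fin n))

/-- The generator `xᵢ`. -/
def X {k : Type} [Field k] {n : ℕ} (i : Fin n) : FA k n :=
  MonoidAlgebra.single (FreeMonoid.of i) 1

/-- Cohomological degree of a word for generator degrees `degs`. -/
def wdeg {n : ℕ} (degs : Fin n → ℤ) (w : FreeMonoid (Fin n)) : ℤ :=
  ((FreeMonoid.toList w).map degs).sum

/-- The sign operator `f ↦ Σ (-1)^{|w|} f_w · w` used in the graded Leibniz rule. -/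
def sgn {k : Type} [Field k] {n : ℕ} (degs : Fin n → ℤ) (f : FA k n) : FA k n :=
  f.coeff.sum fun w c => ((Int.negOnePow (wdeg degs w) : ℤˣ) : ℤ) • MonoidAlgebra.single w c

/-- Degree-vector list of a word: counts of the generators with the count of `xₙ` first. -/
def dlist {n : ℕ} (w : FreeMonoid (Fin n)) : List ℕ :=
  (List.ofFn fun i : Fin n => (FreeMonoid.toList w).count i).reverse

/-- The degree order on monomials: compare degree vectors right-lexicographically first,
then break ties by the right lexicographic word order with `x₁ ≺ ⋯ ≺ xₙ`. -/
instance degOrder {n : ℕ} : LinearOrder (FreeMonoid (Fin n)) :=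
  LinearOrder.lift' (fun w => toLex (dlist w, (FreeMonoid.toList w).reverse))
    (fun a b h => by
      have h2 : (FreeMonoid.toList a).reverse = (FreeMonoid.toList b).reverse :=
        congrArg (fun p : Lex (List ℕ × List (Fin n)) => (ofLex p).2) h
      exact FreeMonoid.toList.injective (List.reverse_injective h2))

/-- `TIP f`: the largest monomial occurring in `f`, with `TIP 0 = ⊥`. -/
def TIP {k : Type} [Field k] {n : ℕ} (f : FA k n) : WithBot (FreeMonoid (Fin n)) :=
  f.coeff.support.max

/-! ### Auxiliary list and lexicographic-order lemmas -/

lemma stmt6_rev_ofFn {α : Type*} {n : ℕ} (f : Fin n → α) :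
    (List.ofFn f).reverse = List.ofFn (fun i => f i.rev) := by
  apply List.ext_getElem
  · simp
  · intro i h1 h2
    simp only [List.getElem_reverse, List.getElem_ofFn, List.length_ofFn] at *
    congr 1
    apply Fin.ext
    simp [Fin.rev]
    omega

lemma stmt6_ofFn_lex_of {n : ℕ} {f g : Fin n → ℕ} (i : Fin n) (h1 : f i < g i)
    (h2 : ∀ j, j < i → f j = g j) :
    List.Lex (· < ·) (List.ofFn f) (List.ofFn g) := by
  induction n with
  | zero => exact i.elim0
  | succ m ih =>
    rw [List.ofFn_succ, List.ofFn_succ]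
    rcases Fin.eq_zero_or_eq_succ i with rfl | ⟨j, rfl⟩
    · exact List.Lex.rel h1
    · have h0 : f 0 = g 0 := h2 0 (Fin.succ_pos j)
      rw [h0]
      exact List.Lex.cons (ih j h1 (fun p hp => h2 p.succ (by simpa using hp)))

lemma stmt6_lex_get {α : Type*} [LinearOrder α] :
    ∀ {l₁ l₂ : List α}, List.Lex (· < ·) l₁ l₂ → l₁.length = l₂.length →
    ∃ p, ∃ (h₁ : p < l₁.length) (h₂ : p < l₂.length), l₁[p] < l₂[p] ∧
      ∀ q, (hq : q < p) → l₁[q]'(by omega) = l₂[q]'(by omega) := by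
  intro l₁ l₂ h
  induction h with
  | nil => intro h; simp at h
  | @rel a l₁ b l₂ hab =>
    intro _
    exact ⟨0, by simp, by simp, by simpa using hab, fun q hq => by omega⟩
  | @cons a l₁ l₂ h ih =>
    intro hlen
    obtain ⟨p, h₁, h₂, hlt, heq⟩ := ih (by simpa using hlen)
    refine ⟨p + 1, by simpa using h₁, by simpa using h₂, by simpa using hlt, ?_⟩
    intro q hq
    cases q with
    | zero => simp
    | succ q => simpa using heq q (by omega)

lemma stmt6_lex_ofFn_iff {n : ℕ} {f g : Fin n → ℕ} :
    List.Lex (· < ·) (List.ofFn f) (List.ofFn g) ↔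
      ∃ i, f i < g i ∧ ∀ j, j < i → f j = g j := by
  constructor
  · intro h
    obtain ⟨p, h₁, h₂, hlt, heq⟩ := stmt6_lex_get h (by simp)
    simp only [List.length_ofFn] at h₁
    refine ⟨⟨p, h₁⟩, by simpa using hlt, fun j hj => ?_⟩
    have := heq j.1 hj
    simpa using this
  · rintro ⟨i, h1, h2⟩; exact stmt6_ofFn_lex_of i h1 h2

lemma stmt6_lex_append {α : Type*} [LinearOrder α] {l₁ l₂ : List α} (s : List α)
    (hlen : l₁.length = l₂.length) (h : List.Lex (· < ·) l₁ l₂) :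
    List.Lex (· < ·) (l₁ ++ s) (l₂ ++ s) := by
  induction h with
  | nil => simp at hlen
  | rel hab => exact List.Lex.rel hab
  | cons h ih => exact List.Lex.cons (ih (by simpa using hlen))

/-! ### Lemmas about the degree order -/

section OrderLemmas
variable {n : ℕ}

/-- count of a letter in a word -/
abbrev stmt6_cnt (j : Fin n) (w : FreeMonoid (Fin n)) : ℕ := (FreeMonoid.toList w).count j

local notation "cnt" => stmt6_cnt

lemma stmt6_dlist_eq (w : FreeMonoid (Fin n)) :
    dlist w = List.ofFn (fun p : Fin n => cnt p.rev w) := stmt6_rev_ofFn _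

lemma stmt6_dlist_lt_iff {v w : FreeMonoid (Fin n)} :
    List.Lex (· < ·) (dlist v) (dlist w) ↔
      ∃ i, cnt i v < cnt i w ∧ ∀ j, i < j → cnt j v = cnt j w := by
  rw [stmt6_dlist_eq, stmt6_dlist_eq, stmt6_lex_ofFn_iff]
  constructor
  · rintro ⟨p, h1, h2⟩
    refine ⟨p.rev, h1, fun j hj => ?_⟩
    have hj' : j.rev < p := by
      rw [← Fin.rev_rev p]
      exact Fin.rev_lt_rev.mpr hj
    have := h2 j.rev hj'
    simpa using this
  · rintro ⟨i, h1, h2⟩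
    refine ⟨i.rev, by simpa using h1, fun j hj => h2 j.rev ?_⟩
    rw [← Fin.rev_rev i]
    exact Fin.rev_lt_rev.mpr hj

lemma stmt6_dlist_eq_iff {v w : FreeMonoid (Fin n)} :
    dlist v = dlist w ↔ ∀ j, cnt j v = cnt j w := by
  unfold dlist
  constructor
  · intro h j
    have := List.ofFn_inj.mp (List.reverse_injective h)
    exact congrFun this j
  · intro h
    congr 1
    exact List.ofFn_inj.mpr (funext h)

lemma stmt6_word_lt_iff {v w : FreeMonoid (Fin n)} : v < w ↔
    (List.Lex (· < ·) (dlist v) (dlist w)) ∨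
      (dlist v = dlist w ∧
        List.Lex (· < ·) (FreeMonoid.toList v).reverse (FreeMonoid.toList w).reverse) :=
  Prod.Lex.lt_iff

lemma stmt6_list_length_eq_sum_count (l : List (Fin n)) : l.length = ∑ j, l.count j := by
  induction l with
  | nil => simp
  | cons a l ih =>
    simp only [List.length_cons, List.count_cons, Finset.sum_add_distrib, ← ih]
    simp [beq_iff_eq]

lemma stmt6_cnt_mul (j : Fin n) (u v : FreeMonoid (Fin n)) :
    cnt j (u * v) = cnt j u + cnt j v := by
  simp [stmt6_cnt, FreeMonoid.toList_mul, List.count_append]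

lemma stmt6_cnt_of (j i : Fin n) : cnt j (FreeMonoid.of i) = if i = j then 1 else 0 := by
  simp [stmt6_cnt, FreeMonoid.toList_of, List.count_singleton']

lemma stmt6_lemA {u w : FreeMonoid (Fin n)} {i : Fin n}
    (h : ∀ j ∈ FreeMonoid.toList u, j < i) :
    u * w < FreeMonoid.of i * w := by
  rw [stmt6_word_lt_iff]
  left
  rw [stmt6_dlist_lt_iff]
  have hci : cnt i u = 0 := List.count_eq_zero.mpr (fun hm => lt_irrefl i (h i hm))
  refine ⟨i, ?_, fun j hj => ?_⟩
  · rw [stmt6_cnt_mul, stmt6_cnt_mul, stmt6_cnt_of, hci, if_pos rfl]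
    omega
  · have hcj : cnt j u = 0 :=
      List.count_eq_zero.mpr (fun hm => absurd (h j hm) (by simp; exact le_of_lt hj))
    rw [stmt6_cnt_mul, stmt6_cnt_mul, stmt6_cnt_of, hcj, if_neg (ne_of_lt hj)]

lemma stmt6_lemB {u w : FreeMonoid (Fin n)} (i : Fin n) (h : u < w) :
    FreeMonoid.of i * u < FreeMonoid.of i * w := by
  rw [stmt6_word_lt_iff] at h ⊢
  rcases h with h | ⟨h1, h2⟩
  · left
    rw [stmt6_dlist_lt_iff] at h ⊢
    obtain ⟨p, hp1, hp2⟩ := h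
    exact ⟨p, by rw [stmt6_cnt_mul, stmt6_cnt_mul]; omega,
      fun j hj => by rw [stmt6_cnt_mul, stmt6_cnt_mul, hp2 j hj]⟩
  · right
    have hcnt : ∀ j, cnt j u = cnt j w := stmt6_dlist_eq_iff.mp h1
    refine ⟨stmt6_dlist_eq_iff.mpr (fun j => by
      rw [stmt6_cnt_mul, stmt6_cnt_mul, hcnt j]), ?_⟩
    have hlen : (FreeMonoid.toList u).length = (FreeMonoid.toList w).length := by
      rw [stmt6_list_length_eq_sum_count, stmt6_list_length_eq_sum_count]
      exact Finset.sum_congr rfl (fun j _ => hcnt j)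
    have hrev : ∀ v : FreeMonoid (Fin n), (FreeMonoid.toList (FreeMonoid.of i * v)).reverse
        = (FreeMonoid.toList v).reverse ++ [i] := by
      intro v; simp [FreeMonoid.toList_mul, FreeMonoid.toList_of]
    rw [hrev, hrev]
    exact stmt6_lex_append _ (by simpa using hlen) h2

end OrderLemmas

/-! ### Algebra lemmas -/

section AlgLemmas
variable {k : Type} [Field k] {n : ℕ}

lemma stmt6_sgn_single (degs : Fin n → ℤ) (w : FreeMonoid (Fin n)) (c : k) :
    sgn degs (MonoidAlgebra.single w c)
      = ((Int.negOnePow (wdeg degs w) : ℤˣ) : ℤ) • MonoidAlgebra.single w c := by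
  unfold sgn
  rw [MonoidAlgebra.coeff_single, Finsupp.sum_single_index]
  simp

lemma stmt6_sgn_one (degs : Fin n → ℤ) : sgn degs (1 : FA k n) = 1 := by
  rw [MonoidAlgebra.one_def, stmt6_sgn_single]
  have : wdeg degs 1 = 0 := by simp [wdeg, FreeMonoid.toList_one]
  rw [this]
  simp

lemma stmt6_d_one (degs : Fin n → ℤ) (d : FA k n →ₗ[k] FA k n)
    (hLeib : ∀ f g : FA k n, d (f * g) = d f * g + sgn degs f * d g) :
    d (1 : FA k n) = 0 := by
  have h := hLeib 1 1
  rw [mul_one, stmt6_sgn_one, mul_one, one_mul] at h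
  exact left_eq_add.mp h

lemma stmt6_adjoin_letters {i : Fin n} {a : FA k n}
    (ha : a ∈ Algebra.adjoin k {x : FA k n | ∃ j : Fin n, j < i ∧ x = X j}) :
    ∀ w ∈ a.coeff.support, ∀ j ∈ FreeMonoid.toList w, j < i := by
  classical
  induction ha using Algebra.adjoin_induction with
  | mem x hx =>
    obtain ⟨j, hj, rfl⟩ := hx
    intro w hw p hp
    rw [X, MonoidAlgebra.coeff_single, Finsupp.support_single_ne_zero _ one_ne_zero] at hw
    rw [Finset.mem_singleton] at hw
    subst hw
    rw [FreeMonoid.toList_of, List.mem_singleton] at hp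
    subst hp
    exact hj
  | algebraMap r =>
    intro w hw p hp
    have : algebraMap k (FA k n) r = MonoidAlgebra.single 1 r := rfl
    rw [this, MonoidAlgebra.coeff_single] at hw
    have := Finsupp.support_single_subset hw
    rw [Finset.mem_singleton] at this
    subst this
    simp [FreeMonoid.toList_one] at hp
  | add x y hx hy ihx ihy =>
    intro w hw p hp
    rw [MonoidAlgebra.coeff_add] at hw
    rcases Finset.mem_union.mp (Finsupp.support_add hw) with h | h
    · exact ihx w h p hp
    · exact ihy w h p hp
  | mul x y hx hy ihx ihy =>
    intro w hw p hp
    obtain ⟨w₁, hw₁, w₂, hw₂, rfl⟩ := Finset.mem_mul.mp (MonoidAlgebra.support_coeff_mul_subset x y hw)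
    rw [FreeMonoid.toList_mul, List.mem_append] at hp
    rcases hp with h | h
    · exact ihx w₁ hw₁ p h
    · exact ihy w₂ hw₂ p h

lemma stmt6_key (degs : Fin n → ℤ) (d : FA k n →ₗ[k] FA k n)
    (hLeib : ∀ f g : FA k n, d (f * g) = d f * g + sgn degs f * d g)
    (hcell : ∀ i : Fin n,
      d (X i) ∈ Algebra.adjoin k {x : FA k n | ∃ j : Fin n, j < i ∧ x = X j}) :
    ∀ w : FreeMonoid (Fin n), ∀ u ∈ (d (MonoidAlgebra.single w (1 : k))).coeff.support, u < w := by
  classical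
  intro w
  induction w using FreeMonoid.recOn with
  | one =>
    rw [← MonoidAlgebra.one_def, stmt6_d_one degs d hLeib]
    simp
  | of_mul i w' ihw =>
    intro u hu
    have hsplit : MonoidAlgebra.single (FreeMonoid.of i * w') (1 : k)
        = X i * MonoidAlgebra.single w' 1 := by
      rw [X, MonoidAlgebra.single_mul_single, one_mul]
    rw [hsplit, hLeib] at hu
    have hsgn : sgn degs (X (k := k) i)
        = ((Int.negOnePow (wdeg degs (FreeMonoid.of i)) : ℤˣ) : ℤ) • X (k := k) i := by
      rw [X]; exact stmt6_sgn_single (k := k) degs _ _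
    rw [hsgn, smul_mul_assoc, MonoidAlgebra.coeff_add] at hu
    rcases Finset.mem_union.mp (Finsupp.support_add hu) with h | h
    · obtain ⟨v, hv, w₂, hw₂, rfl⟩ :=
        Finset.mem_mul.mp (MonoidAlgebra.support_coeff_mul_subset _ _ h)
      have hw₂' : w₂ = w' := by
        have := Finsupp.support_single_subset hw₂
        rwa [Finset.mem_singleton] at this
      subst hw₂'
      exact stmt6_lemA (stmt6_adjoin_letters (hcell i) v hv)
    · have h' : u ∈ (X i * d (MonoidAlgebra.single w' 1)).coeff.support :=
        Finsupp.support_smul h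
      obtain ⟨w₁, hw₁, v, hv, rfl⟩ :=
        Finset.mem_mul.mp (MonoidAlgebra.support_coeff_mul_subset _ _ h')
      have hw₁' : w₁ = FreeMonoid.of i := by
        have := Finsupp.support_single_subset hw₁
        rwa [Finset.mem_singleton] at this
      subst hw₁'
      exact stmt6_lemB i (ihw v hv)

end AlgLemmas

/-- Let `A = k⟨x₁,…,xₙ⟩` be a finite-cell DG algebra: the differential `d` is
`k`-linear, squares to zero, obeys the graded Leibniz rule (for generator degrees `degs`),
and `d xᵢ` lies in the subalgebra generated by `x₁,…,x_{i-1}`. Then for every nonzero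
`f ∈ A` with `d f ≠ 0`, we have `TIP (d f) < TIP f` in the degree order. -/
theorem stmt6 (k : Type) [Field k] (n : ℕ) (degs : Fin n → ℤ)
    (d : FA k n →ₗ[k] FA k n)
    (hd2 : ∀ f, d (d f) = 0)
    (hLeib : ∀ f g : FA k n, d (f * g) = d f * g + sgn degs f * d g)
    (hcell : ∀ i : Fin n,
      d (X i) ∈ Algebra.adjoin k {x : FA k n | ∃ j : Fin n, j < i ∧ x = X j}) :
    ∀ f : FA k n, f ≠ 0 → d f ≠ 0 → TIP (d f) < TIP f := by
  classical
  intro f hf hdf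
  obtain ⟨w₀, hw₀⟩ := Finset.max_of_nonempty (Finsupp.support_nonempty_iff.mpr (MonoidAlgebra.coeff_eq_zero.not.mpr hf))
  obtain ⟨m, hm⟩ := Finset.max_of_nonempty (Finsupp.support_nonempty_iff.mpr (MonoidAlgebra.coeff_eq_zero.not.mpr hdf))
  rw [TIP, TIP, hm, hw₀, WithBot.coe_lt_coe]
  have hmmem : m ∈ (d f).coeff.support := Finset.mem_of_max hm
  have hexp : d f = f.coeff.sum fun w c => c • d (MonoidAlgebra.single w 1) := by
    conv_lhs => rw [← MonoidAlgebra.sum_coeff_single f]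
    rw [map_finsuppSum]
    refine Finsupp.sum_congr fun w hw => ?_
    rw [← map_smul]
    congr 1
    rw [MonoidAlgebra.smul_single, smul_eq_mul, mul_one]
  rw [hexp, MonoidAlgebra.coeff_finsuppSum] at hmmem
  obtain ⟨w, hw, hmw⟩ := Finset.mem_biUnion.mp (Finsupp.support_sum hmmem)
  have hm2 : m ∈ (d (MonoidAlgebra.single w 1)).coeff.support := Finsupp.support_smul hmw
  have h1 : m < w := stmt6_key degs d hLeib hcell w m hm2
  have h2 : w ≤ w₀ := by
    have := Finset.le_max hw
    rw [hw₀] at this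
    exact_mod_cast this
  exact lt_of_lt_of_le h1 h2
end
end

section
/- Let A = (k⟨x₁,…,xₙ⟩, d) be a finite-cell DG algebra and suppose dx_j = x_i for some pair i < j. Then the two-sided DG ideal (x_i, x_j) is acyclic. -/
noncomputable section

namespace Stmt11Aux

variable {k : Type} [Field k] {n : ℕ}

/-- Submodule of elements whose support words all satisfy `p`. -/
def SuppIn (k : Type) [Field k] {n : ℕ} (p : FreeMonoid (Fin n) → Prop) : Submodule k (FA k n) where
  carrier := {f | ∀ w ∈ f.coeff.support, p w}
  add_mem' := fun {f g} hf hg w hw => by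
    classical
    rcases Finset.mem_union.1 (Finsupp.support_add hw) with h | h
    · exact hf w h
    · exact hg w h
  zero_mem' := fun w hw => by simp at hw
  smul_mem' := fun c f hf w hw => hf w (Finsupp.support_smul hw)

lemma mem_SuppIn_iff {p : FreeMonoid (Fin n) → Prop} {f : FA k n} :
    f ∈ SuppIn k p ↔ ∀ w ∈ f.coeff.support, p w := Iff.rfl

lemma single_mem_SuppIn {p : FreeMonoid (Fin n) → Prop} {w : FreeMonoid (Fin n)} (c : k)
    (hw : p w) : MonoidAlgebra.single w c ∈ SuppIn k p := by
  rw [mem_SuppIn_iff]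
  intro v hv
  rcases Finset.mem_singleton.1 (Finsupp.support_single_subset hv) with rfl
  exact hw

lemma mul_mem_SuppIn {p q r : FreeMonoid (Fin n) → Prop} {f g : FA k n}
    (hf : f ∈ SuppIn k p) (hg : g ∈ SuppIn k q)
    (h : ∀ u v, p u → q v → r (u * v)) : f * g ∈ SuppIn k r := by
  rw [mem_SuppIn_iff]
  intro w hw
  classical
  rcases Finset.mem_mul.1 (MonoidAlgebra.support_coeff_mul_subset f g hw) with ⟨u, hu, v, hv, rfl⟩
  exact h u v (mem_SuppIn_iff.1 hf u hu) (mem_SuppIn_iff.1 hg v hv)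

lemma SuppIn_mono {p q : FreeMonoid (Fin n) → Prop} (h : ∀ w, p w → q w) :
    SuppIn k p ≤ SuppIn (n := n) k q := fun f hf =>
  mem_SuppIn_iff.2 fun w hw => h w (mem_SuppIn_iff.1 hf w hw)

/-- Linear extension lemma. -/
lemma map_mem_of_single {T : FA k n →ₗ[k] FA k n} {p : FreeMonoid (Fin n) → Prop}
    {Q : Submodule k (FA k n)}
    (h : ∀ (w : FreeMonoid (Fin n)) (c : k), p w → T (MonoidAlgebra.single w c) ∈ Q)
    {f : FA k n} (hf : f ∈ SuppIn k p) : T f ∈ Q := by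
  rw [← MonoidAlgebra.sum_coeff_single f, map_finsuppSum]
  exact Submodule.sum_mem _ fun w hw => h w _ (mem_SuppIn_iff.1 hf w hw)

lemma map_eq_of_single {T T' : FA k n →ₗ[k] FA k n} {p : FreeMonoid (Fin n) → Prop}
    (h : ∀ (w : FreeMonoid (Fin n)) (c : k),
      p w → T (MonoidAlgebra.single w c) = T' (MonoidAlgebra.single w c))
    {f : FA k n} (hf : f ∈ SuppIn k p) : T f = T' f := by
  conv_lhs => rw [← MonoidAlgebra.sum_coeff_single f]
  conv_rhs => rw [← MonoidAlgebra.sum_coeff_single f]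
  rw [map_finsuppSum, map_finsuppSum]
  exact Finset.sum_congr rfl fun w hw => h w _ (mem_SuppIn_iff.1 hf w hw)


/-- weight of a word -/
def wtf (φ : Fin n → ℕ) (w : FreeMonoid (Fin n)) : ℕ := ((FreeMonoid.toList w).map φ).sum

lemma wtf_mul (φ : Fin n → ℕ) (u v : FreeMonoid (Fin n)) :
    wtf φ (u * v) = wtf φ u + wtf φ v := by
  simp [wtf, FreeMonoid.toList_mul]

/-- the sign scalar -/
def sg (degs : Fin n → ℤ) (a : Fin n) : k := ((Int.negOnePow (degs a) : ℤ) : k)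

lemma sg_mul_self (degs : Fin n → ℤ) (a : Fin n) : (sg degs a : k) * sg degs a = 1 := by
  have h := Int.units_mul_self (Int.negOnePow (degs a))
  have : ((Int.negOnePow (degs a) * Int.negOnePow (degs a) : ℤˣ) : ℤ) = 1 := by rw [h]; rfl
  rw [sg, ← Int.cast_mul, ← Units.val_mul, this, Int.cast_one]

def D0fun (degs : Fin n → ℤ) (i j : Fin n) : List (Fin n) → FA k n
  | [] => 0
  | a :: w => (if a = j then MonoidAlgebra.single (FreeMonoid.ofList (i :: w)) 1 else 0)
      + (sg degs a : k) • (X a * D0fun degs i j w)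

def Sfun (degs : Fin n → ℤ) (i j : Fin n) : List (Fin n) → FA k n
  | [] => 0
  | a :: w =>
      if a = i then MonoidAlgebra.single (FreeMonoid.ofList (j :: w)) 1
      else if a = j then 0
      else (sg degs a : k) • (X a * Sfun degs i j w)

def D0 (degs : Fin n → ℤ) (i j : Fin n) : FA k n →ₗ[k] FA k n :=
  (Finsupp.lsum k fun w => LinearMap.toSpanSingleton k _ (D0fun degs i j (FreeMonoid.toList w)))
    ∘ₗ (MonoidAlgebra.coeffLinearEquiv k).toLinearMap

def S (degs : Fin n → ℤ) (i j : Fin n) : FA k n →ₗ[k] FA k n :=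
  (Finsupp.lsum k fun w => LinearMap.toSpanSingleton k _ (Sfun degs i j (FreeMonoid.toList w)))
    ∘ₗ (MonoidAlgebra.coeffLinearEquiv k).toLinearMap

variable (degs : Fin n → ℤ) (i j : Fin n)

lemma D0_single (w : FreeMonoid (Fin n)) (c : k) :
    D0 degs i j (MonoidAlgebra.single w c) = c • D0fun degs i j (FreeMonoid.toList w) := by
  rw [D0, LinearMap.comp_apply]
  erw [Finsupp.lsum_single]
  rw [LinearMap.toSpanSingleton_apply]

lemma S_single (w : FreeMonoid (Fin n)) (c : k) :
    S degs i j (MonoidAlgebra.single w c) = c • Sfun degs i j (FreeMonoid.toList w) := by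
  rw [S, LinearMap.comp_apply]
  erw [Finsupp.lsum_single]
  rw [LinearMap.toSpanSingleton_apply]

lemma smul_single_one (w : FreeMonoid (Fin n)) (c : k) :
    c • (MonoidAlgebra.single w (1:k)) = MonoidAlgebra.single w c := by
  rw [MonoidAlgebra.smul_single, smul_eq_mul, mul_one]

lemma X_mul_single (a : Fin n) (w : FreeMonoid (Fin n)) (c : k) :
    X a * MonoidAlgebra.single w c = MonoidAlgebra.single (FreeMonoid.of a * w) c := by
  simp [X, MonoidAlgebra.single_mul_single]

lemma toList_of_mul (a : Fin n) (w : FreeMonoid (Fin n)) :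
    FreeMonoid.toList (FreeMonoid.of a * w) = a :: FreeMonoid.toList w := rfl

lemma D0_mul (a : Fin n) (f : FA k n) :
    D0 degs i j (X a * f)
      = (if a = j then X i * f else 0) + (sg degs a : k) • (X a * D0 degs i j f) := by
  induction f using MonoidAlgebra.induction_linear with
  | zero => simp
  | add f g hf hg =>
      rw [mul_add, map_add, hf, hg, map_add]
      split_ifs <;> simp [mul_add, smul_add] <;> abel
  | single w c =>
      rw [X_mul_single, D0_single, toList_of_mul, D0fun, D0_single, smul_add]
      congr 1
      · split_ifs
        · rw [X_mul_single, smul_single_one]; rfl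
        · simp
      · rw [smul_comm, mul_smul_comm]

lemma S_mul (a : Fin n) (f : FA k n) :
    S degs i j (X a * f)
      = (if a = i then X j * f else if a = j then 0 else (sg degs a : k) • (X a * S degs i j f)) := by
  induction f using MonoidAlgebra.induction_linear with
  | zero => split_ifs <;> simp
  | add f g hf hg =>
      rw [mul_add, map_add, hf, hg]
      split_ifs <;> simp [mul_add, smul_add]
  | single w c =>
      rw [X_mul_single, S_single, toList_of_mul, Sfun]
      split_ifs
      · rw [X_mul_single, smul_single_one]; rfl
      · simp
      · rw [S_single, smul_comm, mul_smul_comm]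


lemma sgn_single (w : FreeMonoid (Fin n)) (c : k) :
    sgn degs (MonoidAlgebra.single w c)
      = ((Int.negOnePow (wdeg degs w) : ℤ) : k) • MonoidAlgebra.single w c := by
  unfold sgn
  rw [MonoidAlgebra.coeff_single]
  erw [Finsupp.sum_single_index (by simp)]
  rw [Int.cast_smul_eq_zsmul]

lemma sgn_X (a : Fin n) : sgn degs (X a) = (sg degs a : k) • (X a : FA k n) := by
  rw [X, sgn_single]
  simp [wdeg, sg]

section WithD
variable (d : FA k n →ₗ[k] FA k n)

lemma d_X_mul (hLeib : ∀ f g : FA k n, d (f * g) = d f * g + sgn degs f * d g)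
    (a : Fin n) (f : FA k n) :
    d (X a * f) = d (X a) * f + (sg degs a : k) • (X a * d f) := by
  rw [hLeib, sgn_X, smul_mul_assoc]

lemma d_one (hLeib : ∀ f g : FA k n, d (f * g) = d f * g + sgn degs f * d g) :
    d 1 = 0 := by
  have h := hLeib 1 1
  rw [mul_one] at h
  have h1 : sgn degs (1 : FA k n) = 1 := by
    rw [MonoidAlgebra.one_def, sgn_single]
    have : wdeg degs (1 : FreeMonoid (Fin n)) = 0 := rfl
    rw [this]
    simp [MonoidAlgebra.one_def]
  rw [h1, one_mul] at h
  have := congrArg (fun z => z - d 1) h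
  simpa using this.symm

lemma d_Xi (hd2 : ∀ f, d (d f) = 0) (hdj : d (X j) = X i) : d (X i) = 0 := by
  rw [← hdj]; exact hd2 _

lemma sign_key (hd2 : ∀ f, d (d f) = 0)
    (hLeib : ∀ f g : FA k n, d (f * g) = d f * g + sgn degs f * d g)
    (hdj : d (X j) = X i) : (sg degs i : k) + sg degs j = 0 := by
  have e1 : d (X j * X j) = X i * X j + (sg degs j : k) • (X j * X i) := by
    rw [d_X_mul degs d hLeib, hdj]
  have e2 : d (X i * X j) = (sg degs i : k) • (X i * X i) := by
    rw [d_X_mul degs d hLeib, hdj, d_Xi i j d hd2 hdj, zero_mul, zero_add]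
  have e3 : d (X j * X i) = X i * X i := by
    rw [d_X_mul degs d hLeib, hdj, d_Xi i j d hd2 hdj, mul_zero, smul_zero, add_zero]
  have h0 : (0 : FA k n)
      = (sg degs i : k) • (X i * X i) + (sg degs j : k) • (X i * X i) := by
    rw [← hd2 (X j * X j), e1, map_add, map_smul, e2, e3]
  have h0' : ((sg degs i : k) + sg degs j) • (X i * X i : FA k n) = 0 := by
    rw [add_smul]; exact h0.symm
  rcases smul_eq_zero.1 h0' with h | h
  · exact h
  · exfalso
    have : (X i * X i : FA k n) ≠ 0 := by
      rw [X, MonoidAlgebra.single_mul_single, one_mul]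
      exact fun hz => one_ne_zero (MonoidAlgebra.single_eq_zero.1 hz)
    exact this h

end WithD

def Wsub (m : Fin n) : Subalgebra k (FA k n) :=
  (SuppIn k fun w : FreeMonoid (Fin n) => ∀ b ∈ FreeMonoid.toList w, b < m).toSubalgebra
    (by
      rw [MonoidAlgebra.one_def]
      exact single_mem_SuppIn 1 (fun b hb => absurd hb List.not_mem_nil))
    (fun x y hx hy => mul_mem_SuppIn hx hy (fun u v hu hv b hb => by
      rw [FreeMonoid.toList_mul] at hb
      rcases List.mem_append.1 hb with h | h
      · exact hu b h
      · exact hv b h))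

lemma letters_lt (d : FA k n →ₗ[k] FA k n) (m : Fin n)
    (hc : d (X m) ∈ Algebra.adjoin k {x : FA k n | ∃ l : Fin n, l < m ∧ x = X l}) :
    ∀ w ∈ (d (X m)).coeff.support, ∀ b ∈ FreeMonoid.toList w, b < m := by
  have hle : Algebra.adjoin k {x : FA k n | ∃ l : Fin n, l < m ∧ x = X l} ≤ Wsub m := by
    apply Algebra.adjoin_le
    rintro x ⟨l, hl, rfl⟩
    exact single_mem_SuppIn 1 (by
      intro b hb
      have : b = l := by
        have : FreeMonoid.toList (FreeMonoid.of l) = [l] := rfl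
        rw [this] at hb
        simpa using hb
      rw [this]; exact hl)
  exact hle hc

lemma wtf_update_eq (φ : Fin n → ℕ) (v : ℕ) (l₀ : Fin n) (w : FreeMonoid (Fin n))
    (h : ∀ b ∈ FreeMonoid.toList w, b ≠ l₀) :
    wtf (Function.update φ l₀ v) w = wtf φ w := by
  unfold wtf
  congr 1
  exact List.map_congr_left fun b hb => Function.update_of_ne (h b hb) v φ

lemma exists_phi (d : FA k n →ₗ[k] FA k n) (i j : Fin n) (hij : i < j)
    (hlt : ∀ m : Fin n, ∀ w ∈ (d (X m)).coeff.support, ∀ b ∈ FreeMonoid.toList w, b < m) :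
    ∃ φ : Fin n → ℕ, (∀ l, 1 ≤ φ l) ∧ φ j = φ i ∧
      ∀ l : Fin n, l ≠ j → ∀ w ∈ (d (X l)).coeff.support, wtf φ w < φ l := by
  suffices h : ∀ m : ℕ, ∃ φ : Fin n → ℕ, (∀ l, 1 ≤ φ l) ∧ (j.val < m → φ j = φ i) ∧
      (∀ l : Fin n, l.val < m → l ≠ j → ∀ w ∈ (d (X l)).coeff.support, wtf φ w < φ l) by
    obtain ⟨φ, h1, h2, h3⟩ := h n
    exact ⟨φ, h1, h2 j.isLt, fun l hl => h3 l l.isLt hl⟩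
  intro m
  induction m with
  | zero => exact ⟨fun _ => 1, fun _ => le_refl 1, by omega, by omega⟩
  | succ m ih =>
    obtain ⟨φ, h1, h2, h3⟩ := ih
    by_cases hm : m < n
    · set l₀ : Fin n := ⟨m, hm⟩ with hl₀
      set v : ℕ := if l₀ = j then φ i else 1 + ((d (X l₀)).coeff.support.sup (wtf φ)) with hv
      refine ⟨Function.update φ l₀ v, ?_, ?_, ?_⟩
      · intro l
        rcases eq_or_ne l l₀ with rfl | hne
        · rw [Function.update_self, hv]
          split_ifs
          · exact h1 i
          · omega
        · rw [Function.update_of_ne hne]; exact h1 l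
      · intro hjm
        have hij' : (i : Fin n) ≠ l₀ := by
          intro hcon
          have hi : i.val = m := congrArg Fin.val hcon
          have hm0 : l₀.val = m := rfl
          have : i.val < j.val := hij
          omega
        rw [Function.update_of_ne hij']
        rcases Nat.lt_or_ge j.val m with hjlt | hjge
        · have hjne : (j : Fin n) ≠ l₀ := by
            intro hcon
            have : j.val = m := congrArg Fin.val hcon
            have hm0 : l₀.val = m := rfl
            omega
          rw [Function.update_of_ne hjne]; exact h2 hjlt
        · have hm0 : l₀.val = m := rfl
          have hjeq : (j : Fin n) = l₀ := Fin.ext (by omega)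
          rw [hjeq, Function.update_self, hv, if_pos hjeq.symm]
      · intro l hl hlj w hw
        have hbnd : ∀ b ∈ FreeMonoid.toList w, b < l := hlt l w hw
        have hnol₀ : ∀ b ∈ FreeMonoid.toList w, b ≠ l₀ := by
          intro b hb hcon
          have h1' : b.val < l.val := hbnd b hb
          have h2' : b.val = m := congrArg Fin.val hcon
          have hm0 : l₀.val = m := rfl
          omega
        rw [wtf_update_eq φ v l₀ w hnol₀]
        rcases Nat.lt_or_ge l.val m with hlm | hge
        · have hne : l ≠ l₀ := by
            intro hcon
            have : l.val = m := congrArg Fin.val hcon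
            have hm0 : l₀.val = m := rfl
            omega
          rw [Function.update_of_ne hne]; exact h3 l hlm hlj w hw
        · have hm0 : l₀.val = m := rfl
          have hleq : l = l₀ := Fin.ext (by omega)
          rw [hleq, Function.update_self, hv, if_neg (hleq ▸ hlj)]
          have hle : wtf φ w ≤ (d (X l₀)).coeff.support.sup (wtf φ) :=
            Finset.le_sup (by rw [← hleq]; exact hw)
          omega
    · refine ⟨φ, h1, fun hj => h2 (by have := j.isLt; omega), fun l hl => h3 l (by have := l.isLt; omega)⟩


def pJ (i j : Fin n) (w : FreeMonoid (Fin n)) : Prop :=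
  i ∈ FreeMonoid.toList w ∨ j ∈ FreeMonoid.toList w

lemma mem_SuppIn_top (f : FA k n) : f ∈ SuppIn k (fun _ => True) := fun _ _ => trivial

lemma mul_mem_J_left {f g : FA k n} (hf : f ∈ SuppIn k (pJ i j)) :
    f * g ∈ SuppIn k (pJ i j) :=
  mul_mem_SuppIn hf (mem_SuppIn_top g) (fun u v hu _ => by
    rcases hu with h | h
    · exact Or.inl (by rw [FreeMonoid.toList_mul]; exact List.mem_append.2 (Or.inl h))
    · exact Or.inr (by rw [FreeMonoid.toList_mul]; exact List.mem_append.2 (Or.inl h)))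

lemma mul_mem_J_right {f g : FA k n} (hg : g ∈ SuppIn k (pJ i j)) :
    f * g ∈ SuppIn k (pJ i j) :=
  mul_mem_SuppIn (mem_SuppIn_top f) hg (fun u v _ hv => by
    rcases hv with h | h
    · exact Or.inl (by rw [FreeMonoid.toList_mul]; exact List.mem_append.2 (Or.inr h))
    · exact Or.inr (by rw [FreeMonoid.toList_mul]; exact List.mem_append.2 (Or.inr h)))

lemma toList_ofList_id (wl : List (Fin n)) : FreeMonoid.toList (FreeMonoid.ofList wl) = wl := rfl

lemma single_cons (a : Fin n) (wl : List (Fin n)) (c : k) :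
    MonoidAlgebra.single (FreeMonoid.ofList (a :: wl)) c
      = X a * MonoidAlgebra.single (FreeMonoid.ofList wl) c := by
  rw [X_mul_single]; rfl

lemma Sfun_mem_J : ∀ wl : List (Fin n), Sfun degs i j wl ∈ SuppIn k (pJ i j) := by
  intro wl
  induction wl with
  | nil => exact Submodule.zero_mem _
  | cons a w ih =>
      rw [Sfun]
      split_ifs
      · exact single_mem_SuppIn 1 (Or.inr (by rw [toList_ofList_id]; exact List.mem_cons_self))
      · exact Submodule.zero_mem _
      · exact Submodule.smul_mem _ _ (mul_mem_J_right i j ih)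

lemma X_mem_J_left (hai : a = i ∨ a = j) : (X a : FA k n) ∈ SuppIn k (pJ i j) := by
  apply single_mem_SuppIn
  rcases hai with rfl | rfl
  · exact Or.inl (List.mem_singleton.2 rfl)
  · exact Or.inr (List.mem_singleton.2 rfl)

section WithD2
variable (d : FA k n →ₗ[k] FA k n)

lemma d_single_mem_J
    (hLeib : ∀ f g : FA k n, d (f * g) = d f * g + sgn degs f * d g)
    (hd2 : ∀ f, d (d f) = 0) (hdj : d (X j) = X i) :
    ∀ wl : List (Fin n), (i ∈ wl ∨ j ∈ wl) →
      d (MonoidAlgebra.single (FreeMonoid.ofList wl) 1) ∈ SuppIn k (pJ i j) := by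
  intro wl
  induction wl with
  | nil => intro h; exact absurd h (by simp)
  | cons a w ih =>
      intro hmem
      rw [single_cons, d_X_mul degs d hLeib]
      apply Submodule.add_mem
      · by_cases ha : a = i ∨ a = j
        · rcases ha with rfl | rfl
          · rw [d_Xi a j d hd2 hdj, zero_mul]
            exact Submodule.zero_mem _
          · rw [hdj, ← single_cons]
            exact single_mem_SuppIn 1 (Or.inl (by
              rw [toList_ofList_id]; exact List.mem_cons_self))
        · push_neg at ha
          have hw : i ∈ w ∨ j ∈ w := by
            rcases hmem with h | h
            · rcases List.mem_cons.1 h with h' | h'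
              · exact absurd h'.symm ha.1
              · exact Or.inl h'
            · rcases List.mem_cons.1 h with h' | h'
              · exact absurd h'.symm ha.2
              · exact Or.inr h'
          exact mul_mem_J_right i j (single_mem_SuppIn 1 hw)
      · apply Submodule.smul_mem
        by_cases ha : a = i ∨ a = j
        · exact mul_mem_J_left i j (X_mem_J_left i j ha)
        · push_neg at ha
          have hw : i ∈ w ∨ j ∈ w := by
            rcases hmem with h | h
            · rcases List.mem_cons.1 h with h' | h'
              · exact absurd h'.symm ha.1
              · exact Or.inl h'
            · rcases List.mem_cons.1 h with h' | h'
              · exact absurd h'.symm ha.2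
              · exact Or.inr h'
          exact mul_mem_J_right i j (ih hw)

lemma d_mem_J
    (hLeib : ∀ f g : FA k n, d (f * g) = d f * g + sgn degs f * d g)
    (hd2 : ∀ f, d (d f) = 0) (hdj : d (X j) = X i)
    {f : FA k n} (hf : f ∈ SuppIn k (pJ i j)) : d f ∈ SuppIn k (pJ i j) := by
  refine map_mem_of_single (T := d) (p := pJ i j) ?_ hf
  intro w c hw
  have : MonoidAlgebra.single w c = c • MonoidAlgebra.single w (1:k) := (smul_single_one w c).symm
  rw [this, map_smul]
  refine Submodule.smul_mem _ _ ?_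
  have hw' : w = FreeMonoid.ofList (FreeMonoid.toList w) := rfl
  rw [hw']
  exact d_single_mem_J degs i j d hLeib hd2 hdj (FreeMonoid.toList w) hw

end WithD2

section Weights
variable (φ : Fin n → ℕ)

lemma wtf_of (a : Fin n) : wtf φ (FreeMonoid.of a) = φ a := by
  show ([a].map φ).sum = φ a
  simp

lemma wtf_ofList (wl : List (Fin n)) : wtf φ (FreeMonoid.ofList wl) = (wl.map φ).sum := rfl

lemma mul_mem_F {N M : ℕ} {f g : FA k n} (hf : f ∈ SuppIn k (fun w => wtf φ w ≤ N))
    (hg : g ∈ SuppIn k (fun w => wtf φ w ≤ M)) :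
    f * g ∈ SuppIn k (fun w => wtf φ w ≤ N + M) :=
  mul_mem_SuppIn hf hg (fun u v hu hv => by rw [wtf_mul]; omega)

lemma mul_mem_F_Fs {N M : ℕ} {f g : FA k n} (hf : f ∈ SuppIn k (fun w => wtf φ w ≤ N))
    (hg : g ∈ SuppIn k (fun w => wtf φ w < M)) :
    f * g ∈ SuppIn k (fun w => wtf φ w < N + M) :=
  mul_mem_SuppIn hf hg (fun u v hu hv => by rw [wtf_mul]; omega)

lemma mul_mem_Fs_F {N M : ℕ} {f g : FA k n} (hf : f ∈ SuppIn k (fun w => wtf φ w < N))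
    (hg : g ∈ SuppIn k (fun w => wtf φ w ≤ M)) :
    f * g ∈ SuppIn k (fun w => wtf φ w < N + M) :=
  mul_mem_SuppIn hf hg (fun u v hu hv => by rw [wtf_mul]; omega)

lemma X_mem_F (a : Fin n) : (X a : FA k n) ∈ SuppIn k (fun w => wtf φ w ≤ φ a) :=
  single_mem_SuppIn 1 (le_of_eq (wtf_of φ a))

lemma Sfun_mem_F (hji : φ j = φ i) :
    ∀ wl : List (Fin n), Sfun degs i j wl ∈ SuppIn k (fun w => wtf φ w ≤ (wl.map φ).sum) := by
  intro wl
  induction wl with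
  | nil => exact Submodule.zero_mem _
  | cons a w ih =>
      rw [Sfun]
      split_ifs with h1 h2
      · refine single_mem_SuppIn 1 ?_
        rw [wtf_ofList]
        subst h1
        simp [hji]
      · exact Submodule.zero_mem _
      · refine Submodule.smul_mem _ _ ?_
        have := mul_mem_F φ (X_mem_F φ a) ih
        simpa using this

section WithD3
variable (d : FA k n →ₗ[k] FA k n)

lemma d_sub_D0fun_mem_Fs
    (hLeib : ∀ f g : FA k n, d (f * g) = d f * g + sgn degs f * d g)
    (hdj : d (X j) = X i)
    (hphi : ∀ l : Fin n, l ≠ j → ∀ w ∈ (d (X l)).coeff.support, wtf φ w < φ l) :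
    ∀ wl : List (Fin n),
      d (MonoidAlgebra.single (FreeMonoid.ofList wl) 1) - D0fun degs i j wl
        ∈ SuppIn k (fun w => wtf φ w < (wl.map φ).sum) := by
  intro wl
  induction wl with
  | nil =>
      have : d (MonoidAlgebra.single (FreeMonoid.ofList ([] : List (Fin n))) 1) = 0 := by
        have : (MonoidAlgebra.single (FreeMonoid.ofList ([] : List (Fin n))) (1:k)) = 1 := rfl
        rw [this, d_one degs d hLeib]
      rw [this, D0fun, sub_zero]
      exact Submodule.zero_mem _
  | cons a w ih =>
      have key : d (MonoidAlgebra.single (FreeMonoid.ofList (a :: w)) 1) - D0fun degs i j (a :: w)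
          = (d (X a) * MonoidAlgebra.single (FreeMonoid.ofList w) 1
              - (if a = j then MonoidAlgebra.single (FreeMonoid.ofList (i :: w)) 1 else 0))
            + (sg degs a : k) • (X a *
                (d (MonoidAlgebra.single (FreeMonoid.ofList w) 1) - D0fun degs i j w)) := by
        rw [single_cons, d_X_mul degs d hLeib, D0fun, mul_sub, smul_sub]
        abel
      rw [key]
      refine Submodule.add_mem _ ?_ (Submodule.smul_mem _ _ ?_)
      · split_ifs with haj
        · subst haj
          rw [hdj, ← single_cons, sub_self]
          exact Submodule.zero_mem _
        · rw [sub_zero]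
          have hd : d (X a) ∈ SuppIn k (fun w' => wtf φ w' < φ a) :=
            mem_SuppIn_iff.2 (hphi a haj)
          have he : MonoidAlgebra.single (FreeMonoid.ofList w) (1:k)
              ∈ SuppIn k (fun w' => wtf φ w' ≤ (w.map φ).sum) :=
            single_mem_SuppIn 1 (le_of_eq (wtf_ofList φ w))
          have := mul_mem_Fs_F φ hd he
          simpa using this
      · have he : (X a : FA k n) ∈ SuppIn k (fun w' => wtf φ w' ≤ φ a) := X_mem_F φ a
        have := mul_mem_F_Fs φ he ih
        simpa using this

end WithD3
end Weights

lemma D0_single' (wl : List (Fin n)) :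
    D0 degs i j (MonoidAlgebra.single (FreeMonoid.ofList wl) (1:k)) = D0fun degs i j wl := by
  rw [D0_single]; simp

lemma S_single' (wl : List (Fin n)) :
    S degs i j (MonoidAlgebra.single (FreeMonoid.ofList wl) (1:k)) = Sfun degs i j wl := by
  rw [S_single]; simp

lemma homotopy_single (hij : i ≠ j) (hkey : (sg degs i : k) + sg degs j = 0) :
    ∀ wl : List (Fin n),
      D0 degs i j (Sfun degs i j wl) + S degs i j (D0fun degs i j wl)
        = if i ∈ wl ∨ j ∈ wl then MonoidAlgebra.single (FreeMonoid.ofList wl) (1:k) else 0 := by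
  intro wl
  induction wl with
  | nil =>
      rw [Sfun, D0fun, map_zero, map_zero, add_zero, if_neg (by simp)]
  | cons a w ih =>
      by_cases hai : a = i
      · rw [Sfun, D0fun, hai, if_pos rfl, if_neg hij, zero_add, map_smul,
          S_mul, if_pos rfl, D0_single', D0fun, if_pos rfl]
        have : MonoidAlgebra.single (FreeMonoid.ofList (i :: w)) (1:k)
              + (sg degs j : k) • (X j * D0fun degs i j w)
              + (sg degs i : k) • (X j * D0fun degs i j w)
            = MonoidAlgebra.single (FreeMonoid.ofList (i :: w)) (1:k)
              + ((sg degs j : k) + sg degs i) • (X j * D0fun degs i j w) := by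
          rw [add_smul]; abel
        rw [this, add_comm (sg degs j : k), hkey, zero_smul, add_zero,
          if_pos (Or.inl (List.mem_cons_self))]
      · by_cases haj : a = j
        · have hji : ¬ (j = i) := fun h => hij h.symm
          rw [Sfun, D0fun, haj, if_neg hji, if_pos rfl, map_zero, zero_add, if_pos rfl,
            map_add, map_smul, S_single', Sfun, if_pos rfl, S_mul, if_neg hji, if_pos rfl,
            smul_zero, add_zero, if_pos (Or.inr (List.mem_cons_self))]
        · rw [Sfun, if_neg hai, if_neg haj, D0fun, if_neg haj, zero_add, map_smul, map_smul,
            D0_mul, if_neg haj, zero_add, S_mul, if_neg hai, if_neg haj,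
            smul_smul, sg_mul_self, one_smul, smul_smul, sg_mul_self, one_smul,
            ← mul_add, ih]
          by_cases hw : i ∈ w ∨ j ∈ w
          · rw [if_pos hw, if_pos (by
              rcases hw with h | h
              · exact Or.inl (List.mem_cons_of_mem a h)
              · exact Or.inr (List.mem_cons_of_mem a h)), ← single_cons]
          · rw [if_neg hw, mul_zero, if_neg (by
              intro hcon
              rcases hcon with h | h
              · rcases List.mem_cons.1 h with h' | h'
                · exact hai h'.symm
                · exact hw (Or.inl h')
              · rcases List.mem_cons.1 h with h' | h'
                · exact haj h'.symm
                · exact hw (Or.inr h'))]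


lemma homotopy_J (hij : i ≠ j) (hkey : (sg degs i : k) + sg degs j = 0)
    {f : FA k n} (hf : f ∈ SuppIn k (pJ i j)) :
    D0 degs i j (S degs i j f) + S degs i j (D0 degs i j f) = f := by
  have h := map_eq_of_single
    (T := (D0 degs i j) ∘ₗ (S degs i j) + (S degs i j) ∘ₗ (D0 degs i j))
    (T' := LinearMap.id) (p := pJ i j) ?_ hf
  · simpa using h
  · intro w c hw
    simp only [LinearMap.add_apply, LinearMap.comp_apply, LinearMap.id_apply]
    rw [S_single, D0_single, map_smul, map_smul, ← smul_add]
    have hw' : w = FreeMonoid.ofList (FreeMonoid.toList w) := rfl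
    rw [show Sfun degs i j (FreeMonoid.toList w)
        = Sfun degs i j (FreeMonoid.toList w) from rfl]
    rw [homotopy_single degs i j hij hkey (FreeMonoid.toList w), if_pos (show i ∈ FreeMonoid.toList w ∨ j ∈ FreeMonoid.toList w from hw)]
    rw [← hw', smul_single_one]

lemma S_mem_J' (f : FA k n) : S degs i j f ∈ SuppIn k (pJ i j) := by
  refine map_mem_of_single (T := S degs i j) (p := fun _ => True) ?_ (mem_SuppIn_top f)
  intro w c _
  rw [S_single]
  exact Submodule.smul_mem _ _ (Sfun_mem_J degs i j _)

lemma S_mem_F' (φ : Fin n → ℕ) (hji : φ j = φ i) {N : ℕ} {f : FA k n}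
    (hf : f ∈ SuppIn k (fun w => wtf φ w ≤ N)) :
    S degs i j f ∈ SuppIn k (fun w => wtf φ w ≤ N) := by
  refine map_mem_of_single (T := S degs i j) ?_ hf
  intro w c hw
  rw [S_single]
  refine Submodule.smul_mem _ _ ?_
  exact SuppIn_mono (fun v hv => le_trans hv hw) (Sfun_mem_F degs i j φ hji (FreeMonoid.toList w))

lemma S_mem_Fs' (φ : Fin n → ℕ) (hji : φ j = φ i) {N : ℕ} {f : FA k n}
    (hf : f ∈ SuppIn k (fun w => wtf φ w < N)) :
    S degs i j f ∈ SuppIn k (fun w => wtf φ w < N) := by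
  refine map_mem_of_single (T := S degs i j) ?_ hf
  intro w c hw
  rw [S_single]
  refine Submodule.smul_mem _ _ ?_
  exact SuppIn_mono (fun v hv => lt_of_le_of_lt hv hw) (Sfun_mem_F degs i j φ hji (FreeMonoid.toList w))

lemma d_sub_D0_mem_Fs' (d : FA k n →ₗ[k] FA k n)
    (hLeib : ∀ f g : FA k n, d (f * g) = d f * g + sgn degs f * d g)
    (hdj : d (X j) = X i) (φ : Fin n → ℕ)
    (hphi : ∀ l : Fin n, l ≠ j → ∀ w ∈ (d (X l)).coeff.support, wtf φ w < φ l)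
    {N : ℕ} {f : FA k n} (hf : f ∈ SuppIn k (fun w => wtf φ w ≤ N)) :
    d f - D0 degs i j f ∈ SuppIn k (fun w => wtf φ w < N) := by
  have h := map_mem_of_single (T := d - D0 degs i j)
    (Q := SuppIn k (fun w => wtf φ w < N)) ?_ hf
  · simpa using h
  · intro w c hw
    simp only [LinearMap.sub_apply]
    have hsc : MonoidAlgebra.single w c = c • MonoidAlgebra.single w (1:k) :=
      (smul_single_one w c).symm
    rw [hsc, map_smul, map_smul, ← smul_sub]
    refine Submodule.smul_mem _ _ ?_
    have hw' : w = FreeMonoid.ofList (FreeMonoid.toList w) := rfl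
    rw [hw', D0_single']
    refine SuppIn_mono (fun v hv => lt_of_lt_of_le hv ?_)
      (d_sub_D0fun_mem_Fs degs i j φ d hLeib hdj hphi (FreeMonoid.toList w))
    rw [← wtf_ofList φ (FreeMonoid.toList w), ← hw']
    exact hw

end Stmt11Aux


open Stmt11Aux

/-- Let `A = (k⟨x₁,…,xₙ⟩, d)` be a finite-cell DG algebra (`d` is `k`-linear,
squares to zero, obeys the graded Leibniz rule for generator degrees `degs`, and `d xₘ`
lies in the subalgebra generated by `x₁,…,x_{m-1}`), and suppose `d x_j = x_i` with
`i < j`. Then the two-sided DG ideal `(x_i, x_j)` is acyclic: it is closed under `d` and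
every cycle in it is a boundary of an element of it. -/
theorem stmt11 (k : Type) [Field k] (n : ℕ) (degs : Fin n → ℤ)
    (d : FA k n →ₗ[k] FA k n)
    (hd2 : ∀ f, d (d f) = 0)
    (hLeib : ∀ f g : FA k n, d (f * g) = d f * g + sgn degs f * d g)
    (hcell : ∀ m : Fin n,
      d (X m) ∈ Algebra.adjoin k {x : FA k n | ∃ l : Fin n, l < m ∧ x = X l})
    (i j : Fin n) (hij : i < j) (hdj : d (X j) = X i)
    (I : Submodule k (FA k n))
    (hI : I = Submodule.span k {x | ∃ a b : FA k n, x = a * X i * b ∨ x = a * X j * b}) :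
    (∀ f ∈ I, d f ∈ I) ∧ (∀ f ∈ I, d f = 0 → ∃ g ∈ I, d g = f) := by
  classical
  have hijne : i ≠ j := Fin.ne_of_lt hij
  -- I equals the support-characterized submodule J
  have hJI : I = SuppIn k (pJ i j) := by
    rw [hI]
    apply le_antisymm
    · rw [Submodule.span_le]
      rintro x ⟨a, b, hx | hx⟩ <;> subst hx
      · exact mul_mem_J_left i j (mul_mem_J_right i j (X_mem_J_left i j (Or.inl rfl)))
      · exact mul_mem_J_left i j (mul_mem_J_right i j (X_mem_J_left i j (Or.inr rfl)))
    · intro f hf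
      refine map_mem_of_single (T := LinearMap.id) (p := pJ i j) ?_ hf
      intro w c hw
      simp only [LinearMap.id_apply]
      have key : ∀ t : Fin n, (t = i ∨ t = j) → t ∈ FreeMonoid.toList w →
          MonoidAlgebra.single w c ∈
            Submodule.span k {x : FA k n | ∃ a b : FA k n, x = a * X i * b ∨ x = a * X j * b} := by
        intro t ht hmem
        obtain ⟨s, t', hst⟩ := List.append_of_mem hmem
        have hw' : w = FreeMonoid.ofList (s ++ t :: t') := by
          rw [← hst]; rfl
        have hfac : MonoidAlgebra.single w c
            = (c • MonoidAlgebra.single (FreeMonoid.ofList s) (1:k)) * X t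
              * MonoidAlgebra.single (FreeMonoid.ofList t') (1:k) := by
          rw [smul_mul_assoc, smul_mul_assoc, X, MonoidAlgebra.single_mul_single,
            MonoidAlgebra.single_mul_single, mul_one, one_mul, smul_single_one, hw']
          congr 1
          apply FreeMonoid.toList.injective
          simp [FreeMonoid.toList_mul]
        rw [hfac]
        apply Submodule.subset_span
        rcases ht with rfl | rfl
        · exact ⟨c • MonoidAlgebra.single (FreeMonoid.ofList s) (1:k),
            MonoidAlgebra.single (FreeMonoid.ofList t') (1:k), Or.inl rfl⟩
        · exact ⟨c • MonoidAlgebra.single (FreeMonoid.ofList s) (1:k),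
            MonoidAlgebra.single (FreeMonoid.ofList t') (1:k), Or.inr rfl⟩
      rcases hw with h | h
      · exact key i (Or.inl rfl) h
      · exact key j (Or.inr rfl) h
  have hkey : (sg degs i : k) + sg degs j = 0 := sign_key degs i j d hd2 hLeib hdj
  obtain ⟨φ, hφ1, hφji, hφlt⟩ :=
    exists_phi d i j hij (fun m => letters_lt d m (hcell m))
  constructor
  · intro f hf
    rw [hJI] at hf ⊢
    exact d_mem_J degs i j d hLeib hd2 hdj hf
  · intro f hf hdf
    rw [hJI] at hf ⊢
    have main : ∀ N : ℕ, ∀ f ∈ SuppIn k (pJ i j),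
        f ∈ SuppIn k (fun w => wtf φ w < N) → d f = 0 →
          ∃ g ∈ SuppIn k (pJ i j), d g = f := by
      intro N
      induction N with
      | zero =>
          intro f hfJ hfF hdf0
          have hsupp : f.coeff.support = ∅ :=
            Finset.eq_empty_of_forall_notMem
              (fun w hw => absurd (hfF w hw) (Nat.not_lt_zero _))
          have hf0 : f = 0 := MonoidAlgebra.coeff_injective (Finsupp.support_eq_empty.1 hsupp)
          exact ⟨0, Submodule.zero_mem _, by rw [map_zero, hf0]⟩
      | succ N ih =>
          intro f hfJ hfF hdf0
          have hfF' : f ∈ SuppIn k (fun w => wtf φ w ≤ N) :=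
            fun w hw => Nat.lt_succ_iff.1 (hfF w hw)
          have hSfF : S degs i j f ∈ SuppIn k (fun w => wtf φ w ≤ N) :=
            S_mem_F' degs i j φ hφji hfF'
          have hE1 : d (S degs i j f) - D0 degs i j (S degs i j f)
              ∈ SuppIn k (fun w => wtf φ w < N) :=
            d_sub_D0_mem_Fs' degs i j d hLeib hdj φ hφlt hSfF
          have hE2 : S degs i j (d f - D0 degs i j f)
              ∈ SuppIn k (fun w => wtf φ w < N) :=
            S_mem_Fs' degs i j φ hφji (d_sub_D0_mem_Fs' degs i j d hLeib hdj φ hφlt hfF')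
          have hhom : D0 degs i j (S degs i j f) + S degs i j (D0 degs i j f) = f :=
            homotopy_J degs i j hijne hkey hfJ
          have hf'eq : f - d (S degs i j f)
              = -((d (S degs i j f) - D0 degs i j (S degs i j f))
                  + S degs i j (d f - D0 degs i j f)) := by
            rw [map_sub, hdf0, map_zero, zero_sub]
            calc f - d (S degs i j f)
                = (D0 degs i j (S degs i j f) + S degs i j (D0 degs i j f))
                    - d (S degs i j f) := by rw [hhom]
              _ = -((d (S degs i j f) - D0 degs i j (S degs i j f))
                    + -S degs i j (D0 degs i j f)) := by abel
          have hf'Fs : f - d (S degs i j f) ∈ SuppIn k (fun w => wtf φ w < N) := by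
            rw [hf'eq]
            exact Submodule.neg_mem _ (Submodule.add_mem _ hE1 hE2)
          have hf'J : f - d (S degs i j f) ∈ SuppIn k (pJ i j) :=
            Submodule.sub_mem _ hfJ
              (d_mem_J degs i j d hLeib hd2 hdj (S_mem_J' degs i j f))
          have hdf' : d (f - d (S degs i j f)) = 0 := by
            rw [map_sub, hdf0, hd2, sub_zero]
          obtain ⟨g', hg'J, hg'⟩ := ih (f - d (S degs i j f)) hf'J hf'Fs hdf'
          refine ⟨S degs i j f + g', Submodule.add_mem _ (S_mem_J' degs i j f) hg'J, ?_⟩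
          rw [map_add, hg']
          abel
    exact main (f.coeff.support.sup (wtf φ) + 1) f hf
      (fun w hw => Nat.lt_succ_of_le (Finset.le_sup hw)) hdf
end
end
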